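/- For every integer k ≥ 1 and n ≥ 1, C_{k,2}(n) = Σ_{i=1}^n ((2i−1)k − (i−1))/i · C_{k,2}(i−1) · C_{k,2}(n−i), where C_{k,2}(n) = (1/(2n+1)) · binomial((2n+1)k, n). -/

import Mathlib

open Finset

noncomputable def gch (u : ℚ) (n : ℕ) : ℚ := (∏ j ∈ Finset.range n, (u - j)) / n.factorial

lemma gch_zero (u : ℚ) : gch u 0 = 1 := by simp [gch]

lemma gch_one (u : ℚ) : gch u 1 = u := by simp [gch]

lemma gch_succ (u : ℚ) (n : ℕ) : gch u (n + 1) * (n + 1) = u * gch (u - 1) n := by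
  have h : ∏ j ∈ Finset.range (n + 1), (u - j) = (∏ j ∈ Finset.range n, (u - 1 - j)) * u := by
    rw [Finset.prod_range_succ']
    congr 1
    · apply Finset.prod_congr rfl; intro j _; push_cast; ring
    · simp
  have hf : ((n + 1 : ℕ).factorial : ℚ) = (n.factorial : ℚ) * (n + 1) := by
    rw [Nat.factorial_succ]; push_cast; ring
  have h0 : ((n : ℕ).factorial : ℚ) ≠ 0 := by exact_mod_cast n.factorial_ne_zero
  rw [gch, gch, h, Nat.factorial_succ]
  push_cast
  field_simp

lemma gch_pascal (u : ℚ) (n : ℕ) : gch u (n + 1) = gch (u - 1) (n + 1) + gch (u - 1) n := by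
  have h1 : ∏ j ∈ Finset.range (n + 1), (u - j) = (∏ j ∈ Finset.range n, (u - 1 - j)) * u := by
    rw [Finset.prod_range_succ']
    congr 1
    · apply Finset.prod_congr rfl; intro j _; push_cast; ring
    · simp
  have h2 : ∏ j ∈ Finset.range (n + 1), (u - 1 - j) = (∏ j ∈ Finset.range n, (u - 1 - j)) * (u - 1 - n) := Finset.prod_range_succ _ _
  have h0 : ((n : ℕ).factorial : ℚ) ≠ 0 := by exact_mod_cast n.factorial_ne_zero
  have hn1 : ((n : ℚ) + 1) ≠ 0 := by positivity
  rw [gch, gch, gch, h1, h2, Nat.factorial_succ]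
  push_cast
  field_simp
  ring

noncomputable def Rn (z x : ℚ) : ℕ → ℚ
  | 0 => 1
  | (i + 1) => gch (x + (i + 1) * z) (i + 1) - z * gch (x + (i + 1) * z - 1) i

lemma Rn_zero (z x : ℚ) : Rn z x 0 = 1 := rfl

lemma Rn_succ (z x : ℚ) (i : ℕ) :
    Rn z x (i + 1) = gch (x + (i + 1) * z) (i + 1) - z * gch (x + (i + 1) * z - 1) i := rfl

lemma Rn_rec (z x : ℚ) (i : ℕ) :
    Rn z x (i + 1) = Rn z (x - 1) (i + 1) + Rn z (x + z - 1) i := by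
  cases i with
  | zero =>
      simp only [Rn_succ, Rn_zero, gch_zero]
      norm_num [gch_one]
  | succ j =>
      rw [Rn_succ, Rn_succ, Rn_succ]
      push_cast
      have p1 := gch_pascal (x + (j + 1 + 1) * z) (j + 1)
      have p2 := gch_pascal (x + (j + 1 + 1) * z - 1) j
      have e1 : x + (↑j + 1 + 1) * z - 1 = x - 1 + (↑j + 1 + 1) * z := by ring
      have e3 : x + z - 1 + (↑j + 1) * z = x - 1 + (↑j + 1 + 1) * z := by ring
      rw [e1] at p1 p2
      rw [e3, e1]
      linear_combination p1 - z * p2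

lemma Rn_x_zero (z : ℚ) (i : ℕ) : Rn z 0 (i + 1) = 0 := by
  have h := gch_succ ((i + 1) * z) i
  have e : (i + 1 : ℚ) * z - 1 = 0 + (i + 1) * z - 1 := by ring
  rw [Rn_succ]
  have hi : ((i : ℚ) + 1) ≠ 0 := by positivity
  rw [zero_add]
  have : gch ((i + 1) * z) (i + 1) = (i + 1) * z * gch ((i + 1) * z - 1) i / (i + 1) := by
    rw [eq_div_iff hi]
    linarith [h]
  rw [this]
  field_simp
  ring

lemma rothe (z : ℤ) (y : ℚ) : ∀ (n : ℕ) (x : ℤ),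
    ∑ i ∈ Finset.range (n + 1), Rn z x i * gch (y + ((n - i : ℕ) : ℚ) * z) (n - i)
      = gch ((x : ℚ) + y + n * z) n := by
  intro n
  induction n with
  | zero => intro x; simp [Rn_zero, gch_zero]
  | succ n ih =>
      have hdiff : ∀ x : ℚ,
          ∑ i ∈ Finset.range (n + 2), Rn z x i * gch (y + ((n + 1 - i : ℕ) : ℚ) * z) (n + 1 - i)
            - ∑ i ∈ Finset.range (n + 2), Rn z (x - 1) i * gch (y + ((n + 1 - i : ℕ) : ℚ) * z) (n + 1 - i)
          = ∑ j ∈ Finset.range (n + 1), Rn z (x + z - 1) j * gch (y + ((n - j : ℕ) : ℚ) * z) (n - j) := by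
        intro x
        rw [← Finset.sum_sub_distrib, Finset.sum_range_succ']
        simp only [Rn_zero, Nat.succ_sub_succ, Nat.sub_zero, one_mul, sub_self, add_zero]
        apply Finset.sum_congr rfl
        intro j _
        rw [Rn_rec]
        ring
      have step : ∀ x : ℤ,
          ∑ i ∈ Finset.range (n + 2), Rn z x i * gch (y + ((n + 1 - i : ℕ) : ℚ) * z) (n + 1 - i)
            = ∑ i ∈ Finset.range (n + 2), Rn z ((x : ℚ) - 1) i * gch (y + ((n + 1 - i : ℕ) : ℚ) * z) (n + 1 - i)
              + gch ((x : ℚ) + z - 1 + y + n * z) n := by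
        intro x
        have h1 := hdiff x
        have h2 := ih (x + z - 1)
        push_cast at h2
        rw [h2] at h1
        linarith [h1]
      intro x
      induction x using Int.induction_on with
      | zero =>
          rw [Finset.sum_range_succ']
          norm_num [Rn_x_zero, Rn_zero]
      | succ p hp =>
          have h := step (p + 1)
          have e1 : (((p : ℤ) + 1 : ℤ) : ℚ) - 1 = ((p : ℤ) : ℚ) := by push_cast; ring
          rw [e1] at h
          rw [h, hp]
          have hu := gch_pascal ((((p : ℤ) + 1 : ℤ) : ℚ) + y + ((n + 1 : ℕ) : ℚ) * z) n
          rw [hu]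
          have e2 : (((p : ℤ) + 1 : ℤ) : ℚ) + y + ((n + 1 : ℕ) : ℚ) * z - 1
              = ((p : ℤ) : ℚ) + y + ((n + 1 : ℕ) : ℚ) * z := by push_cast; ring
          have e3 : (((p : ℤ) + 1 : ℤ) : ℚ) + (z : ℚ) - 1 + y + (n : ℚ) * z
              = ((p : ℤ) : ℚ) + y + ((n + 1 : ℕ) : ℚ) * z := by push_cast; ring
          rw [e2, e3]
      | pred p hp =>
          have h := step (-(p : ℤ))
          have e1 : ((-(p : ℤ) : ℤ) : ℚ) - 1 = ((-(p : ℤ) - 1 : ℤ) : ℚ) := by push_cast; ring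
          rw [e1, hp] at h
          have e3 : ((-(p : ℤ) : ℤ) : ℚ) + (z : ℚ) - 1 + y + (n : ℚ) * z
              = ((-(p : ℤ) - 1 : ℤ) : ℚ) + y + ((n + 1 : ℕ) : ℚ) * z := by push_cast; ring
          rw [e3] at h
          have hu := gch_pascal (((-(p : ℤ) : ℤ) : ℚ) + y + ((n + 1 : ℕ) : ℚ) * z) n
          have e2 : ((-(p : ℤ) : ℤ) : ℚ) + y + ((n + 1 : ℕ) : ℚ) * z - 1
              = ((-(p : ℤ) - 1 : ℤ) : ℚ) + y + ((n + 1 : ℕ) : ℚ) * z := by push_cast; ring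
          rw [e2] at hu
          rw [hu] at h
          linarith [h]

lemma hagen (z x : ℤ) (y : ℚ) (n : ℕ) :
    ∑ i ∈ Finset.range (n + 2), Rn z x i * Rn z y (n + 1 - i)
      = Rn z ((x : ℚ) + y) (n + 1) := by
  have h1 := rothe z y (n + 1) x
  have h2 := rothe z (y + z - 1) n x
  have hterm : ∀ i ∈ Finset.range (n + 1), Rn z x i * Rn z y (n + 1 - i)
      = Rn z x i * gch (y + ((n + 1 - i : ℕ) : ℚ) * z) (n + 1 - i)
        - z * (Rn z x i * gch (y + z - 1 + ((n - i : ℕ) : ℚ) * z) (n - i)) := by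
    intro i hi
    have hin : i ≤ n := Nat.lt_succ_iff.mp (Finset.mem_range.mp hi)
    have hsub : n + 1 - i = (n - i) + 1 := by omega
    have hc : ((n - i + 1 : ℕ) : ℚ) = ((n - i : ℕ) : ℚ) + 1 := by
      push_cast; ring
    rw [hsub, Rn_succ, hc]
    have e1 : y + (((n - i : ℕ) : ℚ) + 1) * z - 1 = y + z - 1 + ((n - i : ℕ) : ℚ) * z := by
      ring
    rw [e1]
    ring
  have split : ∑ i ∈ Finset.range (n + 2), Rn z x i * Rn z y (n + 1 - i)
      = (∑ i ∈ Finset.range (n + 2), Rn z x i * gch (y + ((n + 1 - i : ℕ) : ℚ) * z) (n + 1 - i))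
        - z * ∑ i ∈ Finset.range (n + 1),
            Rn z x i * gch (y + z - 1 + ((n - i : ℕ) : ℚ) * z) (n - i) := by
    rw [Finset.sum_range_succ, Finset.sum_range_succ (n := n + 1)]
    have hl : n + 1 - (n + 1) = 0 := by omega
    rw [hl]
    simp only [Rn_zero, gch_zero, mul_one]
    rw [Finset.sum_congr rfl hterm, Finset.sum_sub_distrib, ← Finset.mul_sum]
    ring
  rw [split, h1, h2, Rn_succ]
  have e2 : ((x : ℚ)) + y + ((n + 1 : ℕ) : ℚ) * z = (x : ℚ) + y + ((n : ℚ) + 1) * z := by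
    push_cast; ring
  have e3 : ((x : ℚ)) + (y + z - 1) + (n : ℚ) * z = (x : ℚ) + y + ((n : ℚ) + 1) * z - 1 := by
    ring
  rw [e2, e3]

lemma gch_natCast (m i : ℕ) : gch (m : ℚ) i = (m.choose i : ℚ) := by
  rcases lt_or_ge m i with h | h
  · rw [gch, Nat.choose_eq_zero_of_lt h]
    rw [Finset.prod_eq_zero (Finset.mem_range.mpr h) (by simp)]
    simp
  · rw [gch]
    have hp : ∏ j ∈ Finset.range i, ((m : ℚ) - j) = ((m.descFactorial i : ℕ) : ℚ) := by
      rw [Nat.descFactorial_eq_prod_range, Nat.cast_prod]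
      apply Finset.prod_congr rfl
      intro j hj
      have hjm : j ≤ m := le_trans (le_of_lt (Finset.mem_range.mp hj)) h
      rw [Nat.cast_sub hjm]
    rw [hp, Nat.descFactorial_eq_factorial_mul_choose]
    have h0 : ((i.factorial : ℕ) : ℚ) ≠ 0 := by exact_mod_cast i.factorial_ne_zero
    push_cast
    field_simp

lemma Rn_pos_val (k : ℕ) (hk : 1 ≤ k) (j : ℕ) :
    Rn (2 * (k : ℚ)) (k : ℚ) j = (((2 * j + 1) * k).choose j : ℚ) / (2 * j + 1) := by
  cases j with
  | zero => simp [Rn_zero]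
  | succ j =>
      have hk0 : (k : ℚ) ≠ 0 := by
        have := hk; intro h; rw [show (0:ℚ) = ((0:ℕ):ℚ) by norm_num] at h
        exact absurd (Nat.cast_injective h) (by omega)
      set U : ℕ := (2 * (j + 1) + 1) * k with hU
      have hUval : ((U : ℕ) : ℚ) = (2 * ((j : ℚ) + 1) + 1) * k := by rw [hU]; push_cast; ring
      have hU0 : ((U : ℕ) : ℚ) ≠ 0 := by
        rw [hUval]
        apply mul_ne_zero (by positivity) hk0
      have hUq : (k : ℚ) + ((j : ℚ) + 1) * (2 * (k : ℚ)) = ((U : ℕ) : ℚ) := by rw [hUval]; ring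
      rw [Rn_succ, hUq, gch_natCast]
      have hs := gch_succ ((U : ℕ) : ℚ) j
      rw [gch_natCast] at hs
      have hj1 : ((j : ℚ) + 1) ≠ 0 := by positivity
      have hA : gch (((U : ℕ) : ℚ) - 1) j = (U.choose (j + 1) : ℚ) * ((j : ℚ) + 1) / ((U : ℕ) : ℚ) := by
        field_simp
        linarith [hs]
      rw [hA, hUval]
      have hd : 2 * ((j : ℚ) + 1) + 1 ≠ 0 := by positivity
      push_cast
      field_simp
      ring

lemma Rn_neg_val (k : ℕ) (hk : 1 ≤ k) (i : ℕ) :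
    Rn (2 * (k : ℚ)) (-(k : ℚ)) (i + 1)
      = -((((2 * i + 1) * k).choose (i + 1) : ℚ) / (2 * i + 1)) := by
  have hk0 : (k : ℚ) ≠ 0 := by
    have h1 : (1 : ℚ) ≤ (k : ℚ) := by exact_mod_cast hk
    linarith
  set U : ℕ := (2 * i + 1) * k with hU
  have hUval : ((U : ℕ) : ℚ) = (2 * (i : ℚ) + 1) * k := by rw [hU]; push_cast; ring
  have hU0 : ((U : ℕ) : ℚ) ≠ 0 := by
    rw [hUval]
    apply mul_ne_zero (by positivity) hk0
  have hUq : -(k : ℚ) + ((i : ℚ) + 1) * (2 * (k : ℚ)) = ((U : ℕ) : ℚ) := by rw [hUval]; ring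
  rw [Rn_succ, hUq, gch_natCast]
  have hs := gch_succ ((U : ℕ) : ℚ) i
  rw [gch_natCast] at hs
  have hi1 : ((i : ℚ) + 1) ≠ 0 := by positivity
  have hA : gch (((U : ℕ) : ℚ) - 1) i = (U.choose (i + 1) : ℚ) * ((i : ℚ) + 1) / ((U : ℕ) : ℚ) := by
    field_simp
    linarith [hs]
  rw [hA, hUval]
  have hd : 2 * (i : ℚ) + 1 ≠ 0 := by positivity
  field_simp
  ring

/-- `C_{k,2}(n) = Σ_{i=1}^n ((2i-1)k - (i-1))/i · C_{k,2}(i-1)·C_{k,2}(n-i)`, where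
`C_{k,2}(n) = (1/(2n+1))·binom((2n+1)k, n)`. -/
theorem k2_catalan_recurrence (k : ℕ) (hk : 1 ≤ k) (n : ℕ) (hn : 1 ≤ n) :
    (((2 * n + 1) * k).choose n : ℚ) / (2 * n + 1)
      = ∑ i ∈ Finset.Icc 1 n,
          (((2 * i - 1 : ℕ) : ℚ) * k - ((i - 1 : ℕ) : ℚ)) / i *
            ((((2 * (i - 1) + 1) * k).choose (i - 1) : ℚ) / (2 * (i - 1) + 1)) *
            ((((2 * (n - i) + 1) * k).choose (n - i) : ℚ) / (2 * (n - i) + 1)) := by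
  obtain ⟨m, rfl⟩ : ∃ m, n = m + 1 := ⟨n - 1, by omega⟩
  have H := hagen ((2 * k : ℕ) : ℤ) (-(k : ℕ) : ℤ) ((k : ℕ) : ℚ) m
  have hz : ((((2 * k : ℕ) : ℤ)) : ℚ) = 2 * (k : ℚ) := by push_cast; ring
  have hx : (((-(k : ℕ) : ℤ)) : ℚ) = -(k : ℚ) := by push_cast; ring
  rw [hz, hx] at H
  rw [show -(k : ℚ) + (k : ℚ) = (0 : ℚ) by ring, Rn_x_zero] at H
  rw [Finset.sum_range_succ'] at H
  simp only [Rn_zero, one_mul, Nat.succ_sub_succ, Nat.sub_zero] at H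
  rw [← Rn_pos_val k hk (m + 1)]
  rw [show Finset.Icc 1 (m + 1) = Finset.Ico 1 (m + 2) from (Finset.Ico_add_one_right_eq_Icc 1 (m + 1)).symm,
    Finset.sum_Ico_eq_sum_range]
  rw [show m + 2 - 1 = m + 1 from rfl]
  have Hsum : Rn (2 * (k : ℚ)) ((k : ℚ)) (m + 1)
      = ∑ j ∈ Finset.range (m + 1),
          -(Rn (2 * (k : ℚ)) (-(k : ℚ)) (j + 1) * Rn (2 * (k : ℚ)) ((k : ℚ)) (m - j)) := by
    rw [Finset.sum_neg_distrib]
    linarith [H]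
  rw [Hsum]
  apply Finset.sum_congr rfl
  intro j hj
  rw [show (1 + j) - 1 = j from by omega, show 2 * (1 + j) - 1 = 2 * j + 1 from by omega,
    show m + 1 - (1 + j) = m - j from by omega]
  rw [Rn_neg_val k hk j, Rn_pos_val k hk (m - j)]
  have hMj : j ≤ (2 * j + 1) * k := by
    calc j ≤ 2 * j + 1 := by omega
    _ ≤ (2 * j + 1) * k := Nat.le_mul_of_pos_right _ (by omega)
  have hch := Nat.choose_succ_right_eq ((2 * j + 1) * k) j
  have hchq : ((((2 * j + 1) * k).choose (j + 1) : ℕ) : ℚ) * ((j : ℚ) + 1)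
      = ((((2 * j + 1) * k).choose j : ℕ) : ℚ) * ((2 * (j : ℚ) + 1) * k - j) := by
    have := congrArg (fun t : ℕ => (t : ℚ)) hch
    push_cast [Nat.cast_sub hMj] at this
    linarith [this]
  have hd1 : (2 * (j : ℚ) + 1) ≠ 0 := by positivity
  have key : ((((2 * j + 1) * k).choose (j + 1) : ℕ) : ℚ) / (2 * (j : ℚ) + 1)
      = (((2 * j + 1 : ℕ) : ℚ) * (k : ℚ) - ((j : ℕ) : ℚ)) / ((1 + j : ℕ) : ℚ)
        * (((((2 * j + 1) * k).choose j : ℕ) : ℚ) / (2 * (j : ℚ) + 1)) := by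
    have hj1' : (1 : ℚ) + (j : ℚ) ≠ 0 := by positivity
    push_cast
    field_simp
    linear_combination hchq
  have hjm : j ≤ m := by have := Finset.mem_range.mp hj; omega
  have e1 : (2 * (((1 + j : ℕ) : ℚ) - 1) + 1) = 2 * (j : ℚ) + 1 := by push_cast; ring
  have e2 : (2 * (((m + 1 : ℕ) : ℚ) - ((1 + j : ℕ) : ℚ)) + 1) = 2 * ((m - j : ℕ) : ℚ) + 1 := by
    push_cast [Nat.cast_sub hjm]
    ring
  rw [e1, e2, ← key]
  ring
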